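/- Let U be an N×N unitary matrix, v a unit vector, a ∈ ℂ*, and A := I_N − (1 − a N^{-1/2}) v v*. For z in the open unit disk with z not an eigenvalue of U, z is an eigenvalue of U·A if and only if 1 − (1 − a N^{-1/2}) · v* (I_N − z U*)^{-1} v = 0. -/

import Mathlib

open Matrix Metric

/-- For `|z| < 1` with `z` not an eigenvalue of `U`, `z` is an eigenvalue of `U·A`
(`A = I − (1 − a/√N) v v*`) iff `1 − (1 − a/√N)·v*(I − z U*)⁻¹ v = 0`. -/
theorem stmt6 (N : ℕ) (hN : 1 ≤ N) (U : Matrix (Fin N) (Fin N) ℂ)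
    (hU : Uᴴ * U = 1)
    (v : Fin N → ℂ) (hv : star v ⬝ᵥ v = 1)
    (a : ℂ) (ha : a ≠ 0)
    (A : Matrix (Fin N) (Fin N) ℂ)
    (hA : A = 1 - (1 - a / (Real.sqrt N : ℂ)) • vecMulVec v (star v))
    (z : ℂ) (hz : z ∈ ball (0 : ℂ) 1) (hznot : (U - z • 1).det ≠ 0) :
    (U * A - z • 1).det = 0 ↔
      1 - (1 - a / (Real.sqrt N : ℂ)) * (star v ⬝ᵥ ((1 - z • Uᴴ)⁻¹).mulVec v) = 0 := by
  set c : ℂ := 1 - a / (Real.sqrt N : ℂ) with hc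
  set M : Matrix (Fin N) (Fin N) ℂ := 1 - z • Uᴴ with hM
  have hUU : U * Uᴴ = 1 := mul_eq_one_comm.mp hU
  have hUM : U * M = U - z • 1 := by
    rw [hM, Matrix.mul_sub, Matrix.mul_one, Matrix.mul_smul, hUU]
  have hdet : U.det * M.det ≠ 0 := by rw [← Matrix.det_mul, hUM]; exact hznot
  have hdU : U.det ≠ 0 := left_ne_zero_of_mul hdet
  have hdM : M.det ≠ 0 := right_ne_zero_of_mul hdet
  have hMinv : M * M⁻¹ = 1 :=
    Matrix.mul_nonsing_inv M (isUnit_iff_ne_zero.mpr hdM)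
  set u : Fin N → ℂ := M⁻¹ *ᵥ v with hu
  have hfact : U * A - z • 1 = U * M * (1 - c • vecMulVec u (star v)) := by
    have h1 : M * (c • vecMulVec u (star v)) = c • vecMulVec v (star v) := by
      rw [Matrix.mul_smul, Matrix.vecMulVec_eq Unit, Matrix.vecMulVec_eq Unit,
        ← Matrix.mul_assoc, ← Matrix.replicateCol_mulVec, hu, Matrix.mulVec_mulVec, hMinv,
        Matrix.one_mulVec]
    rw [hA, Matrix.mul_assoc]
    rw [Matrix.mul_sub M, Matrix.mul_one, h1, Matrix.mul_sub U, Matrix.mul_sub U,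
      Matrix.mul_one, hM, Matrix.mul_sub U, Matrix.mul_one, Matrix.mul_smul U z Uᴴ, hUU]
    abel
  have hdetlemma : (1 - c • vecMulVec u (star v)).det = 1 - c * (star v ⬝ᵥ u) := by
    have : (1 : Matrix (Fin N) (Fin N) ℂ) - c • vecMulVec u (star v)
        = 1 + Matrix.replicateCol Unit ((-c) • u) * Matrix.replicateRow Unit (star v) := by
      rw [Matrix.replicateCol_smul, Matrix.smul_mul, ← Matrix.vecMulVec_eq Unit, neg_smul,
        ← sub_eq_add_neg]
    rw [this, Matrix.det_one_add_replicateCol_mul_replicateRow, dotProduct_smul, smul_eq_mul, neg_mul,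
      ← sub_eq_add_neg]
  rw [hfact, Matrix.det_mul, Matrix.det_mul, hdetlemma]
  constructor
  · intro h
    rcases mul_eq_zero.mp h with h' | h'
    · exact absurd h' hdet
    · exact h'
  · intro h; rw [h, mul_zero]
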